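/- Let (Ω, F, P) be a probability space, H a separable real Hilbert space with orthonormal basis {Ψ_j}_{j≥1}, X : Ω → H a measurable random element and Z : Ω → ℝ an integrable random variable. Then the following are equivalent: (a) for every γ ∈ S_H and Lebesgue-almost every u ∈ ℝ, E[Z · 1{⟨X, γ⟩ ≤ u}] = 0; (b) for every integer p ≥ 1, every γ ∈ S_H^p and Lebesgue-almost every u ∈ ℝ, E[Z · 1{⟨X, γ⟩ ≤ u}] = 0. -/

import Mathlib

open MeasureTheory Filter
open scoped RealInnerProductSpace Topology

/-- Equivalence V ⟺ VI of Lemma 2: the moment condition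
`E[Z · 1{⟨X, γ⟩ ≤ u}] = 0` for a.e. `u` holds for every unit-norm `γ ∈ H` iff it holds for
every `p ≥ 1` and every unit-norm `γ` in the span of the first `p` orthonormal basis
elements. -/
theorem stmt_13 {Ω H : Type*} [MeasurableSpace Ω]
    [NormedAddCommGroup H] [InnerProductSpace ℝ H] [CompleteSpace H]
    [TopologicalSpace.SeparableSpace H] [MeasurableSpace H] [BorelSpace H]
    (Ψ : HilbertBasis ℕ ℝ H)
    (P : Measure Ω) [IsProbabilityMeasure P]
    (X : Ω → H) (hX : Measurable X)
    (Z : Ω → ℝ) (hZ : Integrable Z P) :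
    (∀ γ : H, ‖γ‖ = 1 →
        ∀ᵐ u ∂(volume : Measure ℝ), ∫ ω in {ω | ⟪X ω, γ⟫ ≤ u}, Z ω ∂P = 0) ↔
      (∀ p : ℕ, 1 ≤ p →
        ∀ γ ∈ Submodule.span ℝ (Set.range fun j : Fin p => Ψ j), ‖γ‖ = 1 →
          ∀ᵐ u ∂(volume : Measure ℝ), ∫ ω in {ω | ⟪X ω, γ⟫ ≤ u}, Z ω ∂P = 0) := by
  constructor
  · intro h p _ γ _ hγ
    exact h γ hγ
  · intro h γ hγ
    -- measurability of ω ↦ ⟪X ω, δ⟫ for any δ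
    have hmeas : ∀ δ : H, Measurable (fun ω => (⟪X ω, δ⟫ : ℝ)) := by
      intro δ
      exact (Continuous.inner continuous_id continuous_const).measurable.comp hX
    -- partial sums
    set s : ℕ → H := fun p => ∑ j ∈ Finset.range p, Ψ.repr γ j • Ψ j with hs
    have hstend : Tendsto s atTop (𝓝 γ) := (Ψ.hasSum_repr γ).tendsto_sum_nat
    have hnorm : Tendsto (fun p => ‖s p‖) atTop (𝓝 1) := by
      simpa [hγ, Function.comp_def] using (continuous_norm.tendsto γ).comp hstend
    -- eventually ‖s p‖ ≠ 0
    have hev : ∀ᶠ p in atTop, (1/2 : ℝ) < ‖s p‖ :=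
      hnorm.eventually (eventually_gt_nhds (by norm_num))
    obtain ⟨N, hN⟩ := hev.exists_forall_of_atTop
    -- normalized approximants
    set γ' : ℕ → H := fun p => ‖s p‖⁻¹ • s p with hγ'
    have hγ'tend : Tendsto γ' atTop (𝓝 γ) := by
      have h1 : Tendsto (fun p => ‖s p‖⁻¹) atTop (𝓝 (1 : ℝ)) := by
        simpa using hnorm.inv₀ one_ne_zero
      simpa using h1.smul hstend
    have hγ'norm : ∀ p, N ≤ p → ‖γ' p‖ = 1 := by
      intro p hp
      have h0 : ‖s p‖ ≠ 0 := by
        have := hN p hp; positivity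
      simp [hγ', norm_smul, abs_of_nonneg (inv_nonneg.2 (norm_nonneg _)),
        inv_mul_cancel₀ h0]
    have hγ'mem : ∀ p, γ' p ∈ Submodule.span ℝ (Set.range fun j : Fin p => Ψ j) := by
      intro p
      refine Submodule.smul_mem _ _ (Submodule.sum_mem _ fun j hj => ?_)
      refine Submodule.smul_mem _ _ (Submodule.subset_span ?_)
      exact ⟨⟨j, Finset.mem_range.1 hj⟩, rfl⟩
    -- apply hypothesis for each p ≥ N+1
    have hae : ∀ᵐ u ∂(volume : Measure ℝ), ∀ p : ℕ, N + 1 ≤ p →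
        ∫ ω in {ω | ⟪X ω, γ' p⟫ ≤ u}, Z ω ∂P = 0 := by
      rw [ae_all_iff]
      intro p
      by_cases hp : N + 1 ≤ p
      · filter_upwards [h p (le_trans (Nat.le_add_left 1 N) hp) (γ' p) (hγ'mem p)
          (hγ'norm p (le_trans (Nat.le_succ N) hp))] with u hu _
        exact hu
      · filter_upwards with u hc; exact absurd hc hp
    -- the countable set of atoms of ⟪X ·, γ⟫ has Lebesgue measure zero
    have hcnt : (volume : Measure ℝ) {u | 0 < P {ω | ⟪X ω, γ⟫ = u}} = 0 :=
      (Measure.countable_meas_level_set_pos (hmeas γ)).measure_zero _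
    have hcnt' : ∀ᵐ u ∂(volume : Measure ℝ), P {ω | ⟪X ω, γ⟫ = u} = 0 := by
      rw [ae_iff]
      refine measure_mono_null (fun u hu => ?_) hcnt
      exact lt_of_le_of_ne zero_le (Ne.symm hu)
    filter_upwards [hae, hcnt'] with u hu hPatom
    -- rewrite restricted integrals as integrals of indicators
    have hset : ∀ δ : H, MeasurableSet {ω | ⟪X ω, δ⟫ ≤ u} :=
      fun δ => measurableSet_le (hmeas δ) measurable_const
    have hrw : ∀ δ : H, (∫ ω in {ω | ⟪X ω, δ⟫ ≤ u}, Z ω ∂P)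
        = ∫ ω, Set.indicator {ω | ⟪X ω, δ⟫ ≤ u} Z ω ∂P :=
      fun δ => (integral_indicator (hset δ)).symm
    -- dominated convergence
    have hconv : Tendsto (fun p => ∫ ω, Set.indicator {ω | ⟪X ω, γ' p⟫ ≤ u} Z ω ∂P)
        atTop (𝓝 (∫ ω, Set.indicator {ω | ⟪X ω, γ⟫ ≤ u} Z ω ∂P)) := by
      refine tendsto_integral_of_dominated_convergence (fun ω => |Z ω|)
        (fun p => (hZ.1.indicator (hset (γ' p)))) (by simpa using hZ.abs) ?_ ?_
      · intro p
        filter_upwards with ω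
        simpa [Real.norm_eq_abs] using
          (norm_indicator_le_norm_self (s := {ω | ⟪X ω, γ' p⟫ ≤ u}) Z ω)
      · have : ∀ᵐ ω ∂P, ⟪X ω, γ⟫ ≠ u := by
          rw [ae_iff]
          simpa using hPatom
        filter_upwards [this] with ω hω
        have hinner : Tendsto (fun p => (⟪X ω, γ' p⟫ : ℝ)) atTop (𝓝 ⟪X ω, γ⟫) :=
          ((Continuous.inner continuous_const continuous_id).tendsto γ).comp hγ'tend
        rcases lt_or_gt_of_ne hω with hlt | hgt
        · have : ∀ᶠ p in atTop, (⟪X ω, γ' p⟫ : ℝ) ≤ u := by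
            filter_upwards [hinner.eventually (eventually_lt_nhds hlt)] with p hp using hp.le
          have heq : ∀ᶠ p in atTop,
              Set.indicator {ω | ⟪X ω, γ' p⟫ ≤ u} Z ω = Z ω := by
            filter_upwards [this] with p hp
            exact Set.indicator_of_mem (show ω ∈ {ω | ⟪X ω, γ' p⟫ ≤ u} from hp) Z
          have : Set.indicator {ω | ⟪X ω, γ⟫ ≤ u} Z ω = Z ω :=
            Set.indicator_of_mem (show ω ∈ {ω | ⟪X ω, γ⟫ ≤ u} from hlt.le) Z
          rw [this]
          exact Tendsto.congr' (heq.mono fun p hp => hp.symm) tendsto_const_nhds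
        · have : ∀ᶠ p in atTop, ¬ ((⟪X ω, γ' p⟫ : ℝ) ≤ u) := by
            filter_upwards [hinner.eventually (eventually_gt_nhds hgt)] with p hp using not_le.2 hp
          have heq : ∀ᶠ p in atTop,
              Set.indicator {ω | ⟪X ω, γ' p⟫ ≤ u} Z ω = 0 := by
            filter_upwards [this] with p hp
            exact Set.indicator_of_notMem (show ω ∉ {ω | ⟪X ω, γ' p⟫ ≤ u} from hp) Z
          have : Set.indicator {ω | ⟪X ω, γ⟫ ≤ u} Z ω = 0 :=
            Set.indicator_of_notMem (show ω ∉ {ω | ⟪X ω, γ⟫ ≤ u} from not_le.2 hgt) Z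
          rw [this]
          exact Tendsto.congr' (heq.mono fun p hp => hp.symm) tendsto_const_nhds
    -- the sequence is eventually zero, so the limit is zero
    have hzero : Tendsto (fun p => ∫ ω, Set.indicator {ω | ⟪X ω, γ' p⟫ ≤ u} Z ω ∂P)
        atTop (𝓝 0) := by
      refine Tendsto.congr' ?_ tendsto_const_nhds
      filter_upwards [eventually_ge_atTop (N + 1)] with p hp
      rw [← hrw (γ' p)]
      exact (hu p hp).symm
    rw [hrw γ]
    exact tendsto_nhds_unique hconv hzero
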